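/- If for every finite family of unit vectors (âᵢ) and (b̂ⱼ) in S² the correlation matrix with entries −v·(âᵢ · b̂ⱼ) lies in the local polytope, and η ∈ (0,1] is such that every shrunk unit vector η·û is a convex combination of a fixed finite set of unit vectors on which locality holds with visibility v₀, then the visibility η²v₀ admits a local model for all unit vectors. Formally: if the matrix (−v₀ aₓ·b_y)ₓ,y ∈ L_m and η x̂ ∈ conv{aₓ}, η ŷ ∈ conv{b_y} for all unit x̂, ŷ, then for any finite choice of unit vectors (x̂ᵢ), (ŷⱼ), the matrix (−η²v₀ x̂ᵢ·ŷⱼ) lies in the convex hull of deterministic strategies. -/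

import Mathlib

open scoped RealInnerProductSpace

lemma exists_finweights {m : ℕ} {E : Type*} [AddCommGroup E] [Module ℝ E]
    (a : Fin m → E) {x : E} (hx : x ∈ convexHull ℝ (Set.range a)) :
    ∃ p : Fin m → ℝ, (∀ i, 0 ≤ p i) ∧ ∑ i, p i = 1 ∧ ∑ i, p i • a i = x := by
  rw [convexHull_eq] at hx
  obtain ⟨ι, t, w, z, hw0, hw1, hz, hx⟩ := hx
  have ht : t.Nonempty := Finset.nonempty_of_sum_ne_zero (by rw [hw1]; norm_num)
  obtain ⟨i0, hi0⟩ := ht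
  obtain ⟨j0, _⟩ := hz i0 hi0
  classical
  have hg : ∀ i : ι, ∃ j : Fin m, i ∈ t → a j = z i := by
    intro i
    by_cases h : i ∈ t
    · obtain ⟨j, hj⟩ := hz i h
      exact ⟨j, fun _ => hj⟩
    · exact ⟨j0, fun h' => absurd h' h⟩
  choose g hgz using hg
  refine ⟨fun j => ∑ i ∈ t.filter (fun i => g i = j), w i, ?_, ?_, ?_⟩
  · intro j
    exact Finset.sum_nonneg fun i hi => hw0 i (Finset.mem_filter.mp hi).1
  · rw [← hw1]
    exact Finset.sum_fiberwise_of_maps_to (fun i _ => Finset.mem_univ (g i)) w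
  · rw [← hx, Finset.centerMass_eq_of_sum_1 _ _ hw1]
    have : ∀ j : Fin m, (∑ i ∈ t.filter (fun i => g i = j), w i) • a j
        = ∑ i ∈ t.filter (fun i => g i = j), w i • z i := by
      intro j
      rw [Finset.sum_smul]
      refine Finset.sum_congr rfl fun i hi => ?_
      obtain ⟨hit, hgi⟩ := Finset.mem_filter.mp hi
      rw [← hgi, hgz i hit]
    simp_rw [this]
    exact Finset.sum_fiberwise_of_maps_to (fun i _ => Finset.mem_univ (g i)) _

lemma mem_cube {k : ℕ} (A : Fin k → ℝ) (hA : ∀ i, |A i| ≤ 1) :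
    A ∈ convexHull ℝ {v : Fin k → ℝ | ∀ i, v i = 1 ∨ v i = -1} := by
  have hset : {v : Fin k → ℝ | ∀ i, v i = 1 ∨ v i = -1}
      = Set.pi Set.univ (fun _ : Fin k => ({1, -1} : Set ℝ)) := by
    ext v; simp [Set.mem_pi]
  rw [hset, convexHull_pi]
  intro i _
  have : convexHull ℝ ({1, -1} : Set ℝ) = Set.Icc (-1 : ℝ) 1 := by
    rw [convexHull_pair, segment_symm, segment_eq_Icc (by norm_num : (-1:ℝ) ≤ 1)]
  rw [this]
  exact abs_le.mp (hA i)

lemma rankone_mem_local {k l : ℕ} (A : Fin k → ℝ) (B : Fin l → ℝ)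
    (hA : ∀ i, |A i| ≤ 1) (hB : ∀ j, |B j| ≤ 1) :
    (fun i j => A i * B j : Matrix (Fin k) (Fin l) ℝ) ∈
      convexHull ℝ {d : Matrix (Fin k) (Fin l) ℝ |
        ∃ (a' : Fin k → ℝ) (b' : Fin l → ℝ),
          (∀ i, a' i = 1 ∨ a' i = -1) ∧ (∀ j, b' j = 1 ∨ b' j = -1) ∧
          d = fun i j => a' i * b' j} := by
  set S := {d : Matrix (Fin k) (Fin l) ℝ |
        ∃ (a' : Fin k → ℝ) (b' : Fin l → ℝ),
          (∀ i, a' i = 1 ∨ a' i = -1) ∧ (∀ j, b' j = 1 ∨ b' j = -1) ∧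
          d = fun i j => a' i * b' j} with hS
  -- Step 1: for sign vector δ, and any A in the cube, (A i * δ j) ∈ convexHull S
  have step1 : ∀ (A' : Fin k → ℝ), (∀ i, |A' i| ≤ 1) →
      ∀ (δ : Fin l → ℝ), (∀ j, δ j = 1 ∨ δ j = -1) →
      (fun i j => A' i * δ j : Matrix (Fin k) (Fin l) ℝ) ∈ convexHull ℝ S := by
    intro A' hA' δ hδ
    set T : (Fin k → ℝ) → Matrix (Fin k) (Fin l) ℝ := fun v => fun i j => v i * δ j with hT
    have hTlin : IsLinearMap ℝ T := by
      constructor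
      · intro u v; funext i j
        show (u i + v i) * δ j = u i * δ j + v i * δ j
        ring
      · intro c v; funext i j
        show (c * v i) * δ j = c * (v i * δ j)
        ring
    have hmem : T A' ∈ T '' (convexHull ℝ {v : Fin k → ℝ | ∀ i, v i = 1 ∨ v i = -1}) :=
      Set.mem_image_of_mem T (mem_cube A' hA')
    rw [hTlin.image_convexHull] at hmem
    refine (convexHull_mono (𝕜 := ℝ) (E := Matrix (Fin k) (Fin l) ℝ) ?_) hmem
    rintro _ ⟨ε, hε, rfl⟩
    exact ⟨ε, δ, hε, hδ, rfl⟩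
  -- Step 2
  set U : (Fin l → ℝ) → Matrix (Fin k) (Fin l) ℝ := fun v => fun i j => A i * v j with hU
  have hUlin : IsLinearMap ℝ U := by
    constructor
    · intro u v; funext i j
      show A i * (u j + v j) = A i * u j + A i * v j
      ring
    · intro c v; funext i j
      show A i * (c * v j) = c * (A i * v j)
      ring
  have hmem : U B ∈ U '' (convexHull ℝ {v : Fin l → ℝ | ∀ j, v j = 1 ∨ v j = -1}) :=
    Set.mem_image_of_mem U (mem_cube B hB)
  rw [hUlin.image_convexHull] at hmem
  have hsub : U '' {v : Fin l → ℝ | ∀ j, v j = 1 ∨ v j = -1} ⊆ convexHull ℝ S := by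
    rintro _ ⟨δ, hδ, rfl⟩
    exact step1 A hA δ hδ
  exact convexHull_min hsub (convex_convexHull ℝ S) hmem

theorem lift_local_model_to_all_projective (m : ℕ) (η v₀ : ℝ) (hη : 0 < η) (hη1 : η ≤ 1)
    (a b : Fin m → EuclideanSpace ℝ (Fin 3))
    (haunit : ∀ x, ‖a x‖ = 1) (hbunit : ∀ y, ‖b y‖ = 1)
    (hlocal : (fun x y => -v₀ * ⟪a x, b y⟫ : Matrix (Fin m) (Fin m) ℝ) ∈
      convexHull ℝ {d : Matrix (Fin m) (Fin m) ℝ |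
        ∃ a' b' : Fin m → ℝ, (∀ x, a' x = 1 ∨ a' x = -1) ∧ (∀ y, b' y = 1 ∨ b' y = -1) ∧
          d = fun x y => a' x * b' y})
    (hashrink : ∀ xhat : EuclideanSpace ℝ (Fin 3), ‖xhat‖ = 1 →
      η • xhat ∈ convexHull ℝ (Set.range a))
    (hbshrink : ∀ yhat : EuclideanSpace ℝ (Fin 3), ‖yhat‖ = 1 →
      η • yhat ∈ convexHull ℝ (Set.range b)) :
    ∀ (k l : ℕ) (xhat : Fin k → EuclideanSpace ℝ (Fin 3))
      (yhat : Fin l → EuclideanSpace ℝ (Fin 3)),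
      (∀ i, ‖xhat i‖ = 1) → (∀ j, ‖yhat j‖ = 1) →
      (fun i j => -(η ^ 2 * v₀) * ⟪xhat i, yhat j⟫ : Matrix (Fin k) (Fin l) ℝ) ∈
        convexHull ℝ {d : Matrix (Fin k) (Fin l) ℝ |
          ∃ (a' : Fin k → ℝ) (b' : Fin l → ℝ),
            (∀ i, a' i = 1 ∨ a' i = -1) ∧ (∀ j, b' j = 1 ∨ b' j = -1) ∧
            d = fun i j => a' i * b' j} := by
  intro k l xhat yhat hxu hyu
  classical
  -- weights for each xhat i and yhat j
  have hpx := fun i => exists_finweights a (hashrink (xhat i) (hxu i))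
  choose p hp0 hp1 hpa using hpx
  have hqy := fun j => exists_finweights b (hbshrink (yhat j) (hyu j))
  choose q hq0 hq1 hqb using hqy
  -- decomposition of the local matrix
  rw [convexHull_eq] at hlocal
  obtain ⟨ι, t, w, z, hw0, hw1, hz, hL⟩ := hlocal
  have hz' : ∀ r : {x // x ∈ t}, ∃ a' b' : Fin m → ℝ,
      (∀ x, a' x = 1 ∨ a' x = -1) ∧ (∀ y, b' y = 1 ∨ b' y = -1) ∧
      z r.1 = fun x y => a' x * b' y := fun r => hz r.1 r.2
  choose α β hα hβ hzab using hz'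
  -- entrywise formula for the local matrix
  have hLentry : ∀ x y : Fin m, -v₀ * ⟪a x, b y⟫
      = ∑ r ∈ t.attach, w r.1 * (α r x * β r y) := by
    intro x y
    have h1 : t.centerMass w z = ∑ r ∈ t, w r • z r := Finset.centerMass_eq_of_sum_1 _ _ hw1
    have h2 : (∑ r ∈ t, w r • z r) = ∑ r ∈ t.attach, w r.1 • z r.1 :=
      (Finset.sum_attach t fun r => w r • z r).symm
    have := congrFun (congrFun (hL.symm.trans (h1.trans h2)) x) y
    rw [this]
    rw [Matrix.sum_apply]
    refine Finset.sum_congr rfl fun r _ => ?_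
    rw [hzab r]
    rfl
  -- effective responses
  set A : {x // x ∈ t} → Fin k → ℝ := fun r i => ∑ x, p i x * α r x with hAdef
  set B : {x // x ∈ t} → Fin l → ℝ := fun r j => ∑ y, q j y * β r y with hBdef
  have hAbd : ∀ r i, |A r i| ≤ 1 := by
    intro r i
    calc |∑ x, p i x * α r x| ≤ ∑ x, |p i x * α r x| := Finset.abs_sum_le_sum_abs _ _
      _ = ∑ x, p i x := by
            refine Finset.sum_congr rfl fun x _ => ?_
            rw [abs_mul, abs_of_nonneg (hp0 i x)]
            rcases hα r x with h | h <;> simp [h]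
      _ = 1 := hp1 i
  have hBbd : ∀ r j, |B r j| ≤ 1 := by
    intro r j
    calc |∑ y, q j y * β r y| ≤ ∑ y, |q j y * β r y| := Finset.abs_sum_le_sum_abs _ _
      _ = ∑ y, q j y := by
            refine Finset.sum_congr rfl fun y _ => ?_
            rw [abs_mul, abs_of_nonneg (hq0 j y)]
            rcases hβ r y with h | h <;> simp [h]
      _ = 1 := hq1 j
  -- the target matrix is a convex combination of rank-one matrices in the hull
  have hkey : (fun i j => -(η ^ 2 * v₀) * ⟪xhat i, yhat j⟫ : Matrix (Fin k) (Fin l) ℝ)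
      = ∑ r ∈ t.attach, w r.1 • (fun i j => A r i * B r j : Matrix (Fin k) (Fin l) ℝ) := by
    funext i j
    have hinner : η ^ 2 * ⟪xhat i, yhat j⟫ = ∑ x, ∑ y, p i x * q j y * ⟪a x, b y⟫ := by
      have : ⟪η • xhat i, η • yhat j⟫ = η ^ 2 * ⟪xhat i, yhat j⟫ := by
        rw [real_inner_smul_left, real_inner_smul_right]; ring
      rw [← this, ← hpa i, ← hqb j, sum_inner]
      refine Finset.sum_congr rfl fun x _ => ?_
      rw [real_inner_smul_left, inner_sum, Finset.mul_sum]
      refine Finset.sum_congr rfl fun y _ => ?_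
      rw [real_inner_smul_right]
      ring
    have hRHS : (∑ r ∈ t.attach, w r.1 • (fun i j => A r i * B r j :
        Matrix (Fin k) (Fin l) ℝ)) i j
        = ∑ r ∈ t.attach, ∑ x, ∑ y, w r.1 * (p i x * α r x * (q j y * β r y)) := by
      rw [Finset.sum_apply, Finset.sum_apply]
      refine Finset.sum_congr rfl fun r _ => ?_
      have : (w r.1 • (fun i j => A r i * B r j : Matrix (Fin k) (Fin l) ℝ)) i j
          = w r.1 * (A r i * B r j) := rfl
      rw [this, hAdef, hBdef]
      rw [Finset.sum_mul_sum, Finset.mul_sum]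
      refine Finset.sum_congr rfl fun x _ => ?_
      rw [Finset.mul_sum]
    show -(η ^ 2 * v₀) * ⟪xhat i, yhat j⟫ = _
    rw [hRHS]
    calc -(η ^ 2 * v₀) * ⟪xhat i, yhat j⟫
        = -v₀ * (η ^ 2 * ⟪xhat i, yhat j⟫) := by ring
      _ = ∑ x, ∑ y, p i x * q j y * (-v₀ * ⟪a x, b y⟫) := by
            rw [hinner, Finset.mul_sum]
            refine Finset.sum_congr rfl fun x _ => ?_
            rw [Finset.mul_sum]
            exact Finset.sum_congr rfl fun y _ => by ring
      _ = ∑ x, ∑ y, ∑ r ∈ t.attach, p i x * q j y * (w r.1 * (α r x * β r y)) := by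
            refine Finset.sum_congr rfl fun x _ => Finset.sum_congr rfl fun y _ => ?_
            rw [hLentry x y, Finset.mul_sum]
      _ = ∑ x, ∑ r ∈ t.attach, ∑ y, p i x * q j y * (w r.1 * (α r x * β r y)) :=
            Finset.sum_congr rfl fun x _ => Finset.sum_comm
      _ = ∑ r ∈ t.attach, ∑ x, ∑ y, p i x * q j y * (w r.1 * (α r x * β r y)) :=
            Finset.sum_comm
      _ = ∑ r ∈ t.attach, ∑ x, ∑ y, w r.1 * (p i x * α r x * (q j y * β r y)) := by
            refine Finset.sum_congr rfl fun r _ => Finset.sum_congr rfl fun x _ =>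
              Finset.sum_congr rfl fun y _ => by ring
  rw [hkey]
  refine (convex_convexHull ℝ _).sum_mem (fun r _ => hw0 r.1 r.2) ?_
    (fun r _ => rankone_mem_local _ _ (hAbd r) (hBbd r))
  rw [Finset.sum_attach t w]
  exact hw1
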